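/- arXiv:2407.20451 — 2 statements merged into one kernel-verified Lean document; each statement's English description precedes it below -/
import Mathlib

section
/- There exists a threshold C* ∈ (0, 1/2) such that: for 0 < C < C*, Ψ_C has exactly two fixed points in [0,1/2]; for C = C*, Ψ_C has exactly one fixed point in [0,1/2]; and for C* < C ≤ 1/2, Ψ_C has no fixed points in [0,1/2]. -/
open Set

set_option maxHeartbeats 1600000 in
theorem saddle_node_bifurcation (Φ : ℝ → ℝ)
    (hC1 : ContDiffOn ℝ 1 Φ (Set.Icc 0 (1 / 2)))
    (h0 : Φ 0 = 0) (hhalf : Φ (1 / 2) = 1 / 2)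
    (hpos : ∀ r ∈ Set.Ioc (0 : ℝ) (1 / 2), 0 < Φ r)
    (hmono : StrictMonoOn Φ (Set.Ioc (0 : ℝ) (1 / 2)))
    (hdpos : ∀ r ∈ Set.Ioc (0 : ℝ) (1 / 2), 0 < deriv Φ r)
    (hdmono : StrictMonoOn (deriv Φ) (Set.Ioc (0 : ℝ) (1 / 2))) :
    ∃ Cstar ∈ Set.Ioo (0 : ℝ) (1 / 2),
      (∀ C : ℝ, 0 < C → C < Cstar →
        Set.encard {r ∈ Set.Icc (0 : ℝ) (1 / 2) | C + (1 - C) * Φ r = r} = 2) ∧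
      Set.encard {r ∈ Set.Icc (0 : ℝ) (1 / 2) | Cstar + (1 - Cstar) * Φ r = r} = 1 ∧
      (∀ C : ℝ, Cstar < C → C ≤ 1 / 2 →
        Set.encard {r ∈ Set.Icc (0 : ℝ) (1 / 2) | C + (1 - C) * Φ r = r} = 0) := by
  have hcont : ContinuousOn Φ (Icc 0 (1/2)) := hC1.continuousOn
  have hdiffOn : DifferentiableOn ℝ Φ (Icc 0 (1/2)) := hC1.differentiableOn one_ne_zero
  have hdiffAt : ∀ x ∈ Ioo (0:ℝ) (1/2), HasDerivAt Φ (deriv Φ x) x := by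
    intro x hx
    exact ((hdiffOn.differentiableAt (Icc_mem_nhds hx.1 hx.2)).hasDerivAt)
  -- strict convexity
  have hconv : StrictConvexOn ℝ (Icc (0:ℝ) (1/2)) Φ := by
    apply StrictMonoOn.strictConvexOn_of_deriv (convex_Icc _ _) hcont
    rw [interior_Icc]
    exact hdmono.mono Ioo_subset_Ioc_self
  -- Φ r < r on Ioo
  have hlt : ∀ r ∈ Ioo (0:ℝ) (1/2), Φ r < r := by
    intro r hr
    have h1 : (0:ℝ) ∈ Icc (0:ℝ) (1/2) := by constructor <;> norm_num
    have h2 : (1/2:ℝ) ∈ Icc (0:ℝ) (1/2) := by constructor <;> norm_num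
    have ha : (0:ℝ) < 1 - 2*r := by linarith [hr.2]
    have hb : (0:ℝ) < 2*r := by linarith [hr.1]
    have := hconv.2 h1 h2 (by norm_num) ha hb (by ring)
    simp only [smul_eq_mul, h0, hhalf] at this
    calc Φ r = Φ ((1-2*r) * 0 + 2*r * (1/2)) := by ring_nf
    _ < (1-2*r)*0 + 2*r*(1/2) := this
    _ = r := by ring
  have hΦge : ∀ r ∈ Icc (0:ℝ) (1/2), 0 ≤ Φ r := by
    intro r hr
    rcases eq_or_lt_of_le hr.1 with h | h
    · rw [← h, h0]
    · exact (hpos r ⟨h, hr.2⟩).le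
  have hΦle : ∀ r ∈ Icc (0:ℝ) (1/2), Φ r ≤ 1/2 := by
    intro r hr
    rcases eq_or_lt_of_le hr.1 with h | h
    · rw [← h, h0]; norm_num
    · rcases eq_or_lt_of_le hr.2 with h2 | h2
      · rw [h2, hhalf]
      · exact le_of_lt (by rw [← hhalf]; exact hmono ⟨h, hr.2⟩ ⟨by norm_num, le_rfl⟩ h2)
  have hden : ∀ r ∈ Icc (0:ℝ) (1/2), 0 < 1 - Φ r := by
    intro r hr; have := hΦle r hr; linarith
  set g : ℝ → ℝ := fun r => (r - Φ r)/(1 - Φ r) with hgdef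
  have hequiv : ∀ C : ℝ, ∀ r ∈ Icc (0:ℝ) (1/2), (C + (1-C) * Φ r = r ↔ g r = C) := by
    intro C r hr
    have hd := hden r hr
    rw [hgdef]
    simp only
    rw [div_eq_iff (ne_of_gt hd)]
    constructor <;> intro H <;> linarith [H]
  set h : ℝ → ℝ := fun r => (1 - Φ r) - (1 - r) * deriv Φ r with hhdef
  -- h is strictly decreasing on Ioc 0 (1/2)
  have hanti : StrictAntiOn h (Ioc (0:ℝ) (1/2)) := by
    intro a ha b hb hab
    obtain ⟨ξ, hξ, hslope⟩ := exists_deriv_eq_slope Φ hab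
      (hcont.mono (Icc_subset_Icc ha.1.le hb.2))
      (hdiffOn.mono (fun x hx => ⟨ha.1.le.trans hx.1.le, hx.2.le.trans hb.2⟩))
    have hξm : ξ ∈ Ioc (0:ℝ) (1/2) := ⟨ha.1.trans hξ.1, (hξ.2.le.trans hb.2)⟩
    have h1 : deriv Φ a < deriv Φ ξ := hdmono ha hξm hξ.1
    have h2 : deriv Φ a < deriv Φ b := hdmono ha hb hab
    have hΦab : Φ b - Φ a = deriv Φ ξ * (b - a) := by
      have hba' : b - a ≠ 0 := by intro hz; linarith
      field_simp at hslope
      linarith [hslope]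
    have hba : 0 < b - a := by linarith
    have h3 : deriv Φ a * (b - a) < Φ b - Φ a := by
      rw [hΦab]
      exact mul_lt_mul_of_pos_right h1 hba
    have h4 : 0 < 1 - b := by linarith [hb.2]
    simp only [hhdef]
    nlinarith [mul_lt_mul_of_pos_left h2 h4]
  -- derivative of g
  have hgderiv : ∀ x ∈ Ioo (0:ℝ) (1/2), HasDerivAt g (h x / (1 - Φ x)^2) x := by
    intro x hx
    have hxI : x ∈ Icc (0:ℝ) (1/2) := ⟨hx.1.le, hx.2.le⟩
    have hd := hden x hxI
    have H1 : HasDerivAt (fun r => r - Φ r) (1 - deriv Φ x) x :=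
      (hasDerivAt_id x).sub (hdiffAt x hx)
    have H2 : HasDerivAt (fun r => 1 - Φ r) (0 - deriv Φ x) x :=
      (hasDerivAt_const x 1).sub (hdiffAt x hx)
    have := H1.div H2 (ne_of_gt hd)
    refine this.congr_deriv ?_
    rw [hhdef]
    field_simp
    ring
  -- continuity of deriv Φ on Ioo
  have hdercont : ContinuousOn (deriv Φ) (Ioo (0:ℝ) (1/2)) := by
    have h1 : ContinuousOn (derivWithin Φ (Icc 0 (1/2))) (Icc (0:ℝ) (1/2)) :=
      hC1.continuousOn_derivWithin (uniqueDiffOn_Icc (by norm_num)) le_rfl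
    apply (h1.mono Ioo_subset_Icc_self).congr
    intro x hx
    exact (derivWithin_of_mem_nhds (Icc_mem_nhds hx.1 hx.2)).symm
  have hhcont : ContinuousOn h (Ioo (0:ℝ) (1/2)) := by
    apply ContinuousOn.sub
    · exact (continuousOn_const.sub (hcont.mono Ioo_subset_Icc_self))
    · exact (continuousOn_const.sub continuousOn_id).mul hdercont
  -- a point where h is positive
  obtain ⟨η, hη, hηs⟩ := exists_deriv_eq_slope Φ (by norm_num : (0:ℝ) < 1/4)
    (hcont.mono (Icc_subset_Icc le_rfl (by norm_num)))
    (hdiffOn.mono (fun x hx => ⟨hx.1.le, by linarith [hx.2]⟩))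
  rw [h0] at hηs
  have hΦq : Φ (1/4) < 1/4 := hlt (1/4) (by constructor <;> norm_num)
  have ht1 : deriv Φ η < 1 := by rw [hηs]; rw [div_lt_one (by norm_num)]; linarith
  obtain ⟨t, htdef⟩ : ∃ t, deriv Φ η = t := ⟨_, rfl⟩
  rw [htdef] at ht1
  have ht0 : 0 < t := htdef ▸ hdpos η ⟨hη.1, by linarith [hη.2]⟩
  obtain ⟨a0, ha0def⟩ : ∃ a, a = min η ((1 - t)/2) := ⟨_, rfl⟩
  have ha0pos : 0 < a0 := ha0def ▸ lt_min hη.1 (by linarith)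
  have ha0η : a0 ≤ η := ha0def ▸ min_le_left _ _
  have ha0t : a0 ≤ (1-t)/2 := ha0def ▸ min_le_right _ _
  have ha0half : a0 < 1/4 := lt_of_le_of_lt ha0η hη.2
  have ha0Ioo : a0 ∈ Ioo (0:ℝ) (1/2) := ⟨ha0pos, by linarith⟩
  have hha0 : 0 < h a0 := by
    have hΦa0 : Φ a0 < a0 := hlt a0 ha0Ioo
    have hda0 : deriv Φ a0 ≤ t := by
      rcases eq_or_lt_of_le ha0η with he | he
      · rw [he, htdef]
      · exact le_of_lt (htdef ▸ hdmono ⟨ha0pos, by linarith⟩ ⟨hη.1, by linarith [hη.2]⟩ he)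
    have hda0pos : 0 < deriv Φ a0 := hdpos a0 ⟨ha0pos, ha0Ioo.2.le⟩
    have h1a : (1 - a0) * deriv Φ a0 ≤ deriv Φ a0 := by nlinarith
    simp only [hhdef]
    nlinarith
  -- a point where h is negative
  obtain ⟨ξ, hξ, hξs⟩ := exists_deriv_eq_slope Φ (by norm_num : (1/4:ℝ) < 1/2)
    (hcont.mono (Icc_subset_Icc (by norm_num) le_rfl))
    (hdiffOn.mono (fun x hx => ⟨by linarith [hx.1], hx.2.le⟩))
  rw [hhalf] at hξs
  have hs1 : 1 < deriv Φ ξ := by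
    rw [hξs]; rw [lt_div_iff₀ (by norm_num)]; linarith
  obtain ⟨s, hsdef⟩ : ∃ s, deriv Φ ξ = s := ⟨_, rfl⟩
  rw [hsdef] at hs1
  obtain ⟨M, hMdef⟩ : ∃ M, deriv Φ (1/2) = M := ⟨_, rfl⟩
  have hM0 : 0 < M := hMdef ▸ hdpos (1/2) ⟨by norm_num, le_rfl⟩
  have hMne : M ≠ 0 := ne_of_gt hM0
  obtain ⟨δ, hδdef⟩ : ∃ d, d = min ((s-1)/(4*M)) ((1/2 - ξ)/2) := ⟨_, rfl⟩
  have hδpos : 0 < δ := hδdef ▸ lt_min (div_pos (by linarith) (by linarith)) (by linarith [hξ.2])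
  have hδ1 : δ ≤ (s-1)/(4*M) := hδdef ▸ min_le_left _ _
  have hδ2 : δ ≤ (1/2 - ξ)/2 := hδdef ▸ min_le_right _ _
  obtain ⟨b0, hb0def⟩ : ∃ b, b = 1/2 - δ := ⟨_, rfl⟩
  have hb0ξ : ξ < b0 := by rw [hb0def]; linarith [hξ.2]
  have hb0Ioo : b0 ∈ Ioo (0:ℝ) (1/2) := ⟨by rw [hb0def]; linarith [hξ.1], by rw [hb0def]; linarith⟩
  have hhb0 : h b0 < 0 := by
    obtain ⟨z, hz, hzs⟩ := exists_deriv_eq_slope Φ hb0Ioo.2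
      (hcont.mono (Icc_subset_Icc hb0Ioo.1.le le_rfl))
      (hdiffOn.mono (fun x hx => ⟨hb0Ioo.1.le.trans hx.1.le, hx.2.le⟩))
    rw [hhalf] at hzs
    have hzM : deriv Φ z < M :=
      hMdef ▸ hdmono ⟨hb0Ioo.1.trans hz.1, hz.2.le⟩ ⟨by norm_num, le_rfl⟩ hz.2
    have hb0lt : 0 < 1/2 - b0 := by rw [hb0def]; linarith
    have hb0eq : (1:ℝ)/2 - b0 = δ := by rw [hb0def]; ring
    have hΦb0 : 1/2 - Φ b0 ≤ M * δ := by
      rw [eq_div_iff (by linarith : (1:ℝ)/2 - b0 ≠ 0)] at hzs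
      have : (1/2 - Φ b0) = deriv Φ z * (1/2 - b0) := by linarith
      rw [this, hb0eq]
      exact mul_le_mul_of_nonneg_right hzM.le (hb0eq ▸ hb0lt.le)
    have hsb0 : s < deriv Φ b0 :=
      hsdef ▸ hdmono ⟨by linarith [hξ.1], by linarith [hξ.2]⟩ ⟨hb0Ioo.1, hb0Ioo.2.le⟩ hb0ξ
    have hMδ : M * δ ≤ (s-1)/4 := by
      calc M * δ ≤ M * ((s-1)/(4*M)) := mul_le_mul_of_nonneg_left hδ1 hM0.le
      _ = (s-1)/4 := by field_simp
    have h1b0' : 1 - b0 = 1/2 + δ := by rw [hb0def]; ring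
    have key : (1/2 + δ) * s < (1/2 + δ) * deriv Φ b0 :=
      mul_lt_mul_of_pos_left hsb0 (by linarith)
    have hδs : 0 < δ * s := mul_pos hδpos (by linarith)
    simp only [hhdef]
    rw [h1b0']
    linarith [key, hΦb0, hMδ, hδs]
  -- the critical point rstar
  have ha0b0 : a0 < b0 := by linarith [hξ.1, hb0ξ]
  have hIccsub : Icc a0 b0 ⊆ Ioo (0:ℝ) (1/2) :=
    fun x hx => ⟨lt_of_lt_of_le ha0pos hx.1, lt_of_le_of_lt hx.2 hb0Ioo.2⟩
  obtain ⟨rstar, hrstarI, hrstar⟩ : ∃ r ∈ Icc a0 b0, h r = 0 := by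
    have := intermediate_value_Icc' ha0b0.le (hhcont.mono hIccsub)
    exact this ⟨hhb0.le, hha0.le⟩
  have hrstarIoo : rstar ∈ Ioo (0:ℝ) (1/2) := hIccsub hrstarI
  have hrstarIcc : rstar ∈ Icc (0:ℝ) (1/2) := ⟨hrstarIoo.1.le, hrstarIoo.2.le⟩
  -- continuity of g
  have hgcont : ContinuousOn g (Icc (0:ℝ) (1/2)) := by
    rw [hgdef]
    exact (continuousOn_id.sub hcont).div (continuousOn_const.sub hcont)
      (fun x hx => ne_of_gt (hden x hx))
  -- monotonicity of g on the two sides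
  have hgmono : StrictMonoOn g (Icc (0:ℝ) rstar) := by
    apply strictMonoOn_of_deriv_pos (convex_Icc _ _)
      (hgcont.mono (Icc_subset_Icc le_rfl hrstarIoo.2.le))
    intro x hx
    rw [interior_Icc] at hx
    have hxIoo : x ∈ Ioo (0:ℝ) (1/2) := ⟨hx.1, hx.2.trans hrstarIoo.2⟩
    rw [(hgderiv x hxIoo).deriv]
    have hhx : 0 < h x := by
      have := hanti ⟨hx.1, hxIoo.2.le⟩ ⟨hrstarIoo.1, hrstarIoo.2.le⟩ hx.2
      rw [hrstar] at this; exact this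
    have hd := hden x ⟨hxIoo.1.le, hxIoo.2.le⟩
    exact div_pos hhx (pow_pos hd 2)
  have hganti : StrictAntiOn g (Icc rstar (1/2)) := by
    apply strictAntiOn_of_deriv_neg (convex_Icc _ _)
      (hgcont.mono (Icc_subset_Icc hrstarIoo.1.le le_rfl))
    intro x hx
    rw [interior_Icc] at hx
    have hxIoo : x ∈ Ioo (0:ℝ) (1/2) := ⟨hrstarIoo.1.trans hx.1, hx.2⟩
    rw [(hgderiv x hxIoo).deriv]
    have hhx : h x < 0 := by
      have := hanti ⟨hrstarIoo.1, hrstarIoo.2.le⟩ ⟨hxIoo.1, hxIoo.2.le⟩ hx.1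
      rw [hrstar] at this; exact this
    have hd := hden x ⟨hxIoo.1.le, hxIoo.2.le⟩
    exact div_neg_of_neg_of_pos hhx (pow_pos hd 2)
  have hg0 : g 0 = 0 := by rw [hgdef]; simp [h0]
  have hghalf : g (1/2) = 0 := by rw [hgdef]; simp only; rw [hhalf]; ring_nf
  have hgpos : ∀ r ∈ Ioo (0:ℝ) (1/2), 0 < g r := by
    intro r hr
    have h1 := hlt r hr
    have h2 := hden r ⟨hr.1.le, hr.2.le⟩
    rw [hgdef]
    exact div_pos (by linarith) h2
  -- define Cstar
  refine ⟨g rstar, ⟨hgpos rstar hrstarIoo, ?_⟩, ?_, ?_, ?_⟩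
  · -- Cstar < 1/2
    have h2 := hden rstar hrstarIcc
    have h3 := hpos rstar ⟨hrstarIoo.1, hrstarIoo.2.le⟩
    rw [hgdef]
    simp only
    rw [div_lt_iff₀ h2]
    nlinarith [hrstarIoo.2]
  · -- two fixed points for 0 < C < Cstar
    intro C hC0 hCs
    obtain ⟨x, hxI, hxg⟩ : ∃ x ∈ Icc (0:ℝ) rstar, g x = C := by
      have := intermediate_value_Icc hrstarIoo.1.le
        (hgcont.mono (Icc_subset_Icc le_rfl hrstarIoo.2.le))
      exact this (by rw [hg0]; exact ⟨hC0.le, hCs.le⟩)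
    obtain ⟨y, hyI, hyg⟩ : ∃ y ∈ Icc rstar (1/2:ℝ), g y = C := by
      have := intermediate_value_Icc' hrstarIoo.2.le
        (hgcont.mono (Icc_subset_Icc hrstarIoo.1.le le_rfl))
      exact this (by rw [hghalf]; exact ⟨hC0.le, hCs.le⟩)
    have hxy : x ≠ y := by
      intro he
      have : x = rstar := le_antisymm hxI.2 (he ▸ hyI.1)
      rw [this] at hxg
      exact absurd hxg (ne_of_lt (by linarith)).symm
    have hxIcc : x ∈ Icc (0:ℝ) (1/2) := ⟨hxI.1, hxI.2.trans hrstarIoo.2.le⟩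
    have hyIcc : y ∈ Icc (0:ℝ) (1/2) := ⟨hrstarIoo.1.le.trans hyI.1, hyI.2⟩
    have hset : {r ∈ Icc (0:ℝ) (1/2) | C + (1 - C) * Φ r = r} = {x, y} := by
      ext r
      simp only [mem_setOf_eq, mem_insert_iff, mem_singleton_iff]
      constructor
      · rintro ⟨hrI, hr⟩
        rw [hequiv C r hrI] at hr
        rcases le_total r rstar with hc | hc
        · left
          exact hgmono.injOn ⟨hrI.1, hc⟩ ⟨hxI.1, hxI.2⟩ (by rw [hr, hxg])
        · right
          exact hganti.injOn ⟨hc, hrI.2⟩ ⟨hyI.1, hyI.2⟩ (by rw [hr, hyg])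
      · rintro (rfl | rfl)
        · exact ⟨hxIcc, (hequiv C r hxIcc).2 hxg⟩
        · exact ⟨hyIcc, (hequiv C r hyIcc).2 hyg⟩
    rw [hset]
    exact Set.encard_pair hxy
  · -- exactly one fixed point at Cstar
    have hset : {r ∈ Icc (0:ℝ) (1/2) | g rstar + (1 - g rstar) * Φ r = r} = {rstar} := by
      ext r
      simp only [mem_setOf_eq, mem_singleton_iff]
      constructor
      · rintro ⟨hrI, hr⟩
        rw [hequiv (g rstar) r hrI] at hr
        by_contra hne
        rcases lt_or_gt_of_ne hne with hc | hc
        · have := hgmono ⟨hrI.1, hc.le⟩ ⟨hrstarIoo.1.le, le_rfl⟩ hc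
          rw [hr] at this; exact lt_irrefl _ this
        · have := hganti ⟨le_rfl, hrstarIoo.2.le⟩ ⟨hc.le, hrI.2⟩ hc
          rw [hr] at this; exact lt_irrefl _ this
      · rintro rfl
        exact ⟨hrstarIcc, (hequiv (g r) r hrstarIcc).2 rfl⟩
    rw [hset]
    exact Set.encard_singleton _
  · -- no fixed points for C > Cstar
    intro C hCs hC
    have hset : {r ∈ Icc (0:ℝ) (1/2) | C + (1 - C) * Φ r = r} = (∅ : Set ℝ) := by
      ext r
      simp only [mem_setOf_eq, mem_empty_iff_false, iff_false, not_and]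
      intro hrI hr
      rw [hequiv C r hrI] at hr
      have hle : g r ≤ g rstar := by
        rcases le_total r rstar with hc | hc
        · exact hgmono.monotoneOn ⟨hrI.1, hc⟩ ⟨hrstarIoo.1.le, le_rfl⟩ hc
        · exact hganti.antitoneOn ⟨le_rfl, hrstarIoo.2.le⟩ ⟨hc, hrI.2⟩ hc
      rw [hr] at hle
      exact absurd hCs (not_lt.mpr hle)
    rw [hset]
    exact Set.encard_empty
end

section
/- For the M=3 case with committed fraction C, the fixed points of Ψ_C(r) = C + (1−C)(3r^2 − 2r^3) in [0,1/2] undergo a saddle-node bifurcation: there exists C* ∈ (0,1/2) such that the equation C + (1−C)(3r^2 − 2r^3) = r has two solutions in [0,1/2] for 0 < C < C*, one solution for C = C*, and no solutions for C* < C ≤ 1/2. -/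
lemma key_M3 (C r : ℝ) (hr2 : r ≤ 1/2) :
    (C + (1 - C) * (3 * r ^ 2 - 2 * r ^ 3) = r) ↔ (1 - C) * (2 * r ^ 2 - r) + C = 0 := by
  have h1 : (1:ℝ) - r ≠ 0 := by intro h; nlinarith
  constructor
  · intro h
    have h2 : (1 - r) * ((1 - C) * (2 * r ^ 2 - r) + C) = 0 := by linear_combination h
    rcases mul_eq_zero.1 h2 with h3 | h3
    · exact absurd h3 h1
    · exact h3
  · intro h
    linear_combination (1 - r) * h

theorem saddle_node_M3 :
    ∃ Cstar ∈ Set.Ioo (0 : ℝ) (1 / 2),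
      (∀ C : ℝ, 0 < C → C < Cstar →
        Set.encard {r ∈ Set.Icc (0 : ℝ) (1 / 2) |
          C + (1 - C) * (3 * r ^ 2 - 2 * r ^ 3) = r} = 2) ∧
      Set.encard {r ∈ Set.Icc (0 : ℝ) (1 / 2) |
        Cstar + (1 - Cstar) * (3 * r ^ 2 - 2 * r ^ 3) = r} = 1 ∧
      (∀ C : ℝ, Cstar < C → C ≤ 1 / 2 →
        Set.encard {r ∈ Set.Icc (0 : ℝ) (1 / 2) |
          C + (1 - C) * (3 * r ^ 2 - 2 * r ^ 3) = r} = 0) := by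
  refine ⟨1/9, by norm_num, ?_, ?_, ?_⟩
  · -- two solutions
    intro C hC0 hC1
    have ha : (0:ℝ) < 1 - C := by linarith
    have hd : (0:ℝ) < (1 - C) * ((1 - C) - 8*C) := by
      apply mul_pos ha; linarith
    set s := Real.sqrt ((1 - C) * ((1 - C) - 8*C)) with hs_def
    have hs : 0 < s := Real.sqrt_pos.2 hd
    have hs2 : s^2 = (1 - C) * ((1 - C) - 8*C) := Real.sq_sqrt hd.le
    have hsa : s < 1 - C := by
      have h1 : s < Real.sqrt ((1 - C)^2) := by
        apply Real.sqrt_lt_sqrt hd.le; nlinarith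
      rwa [Real.sqrt_sq ha.le] at h1
    have h4a : (0:ℝ) < 4*(1 - C) := by linarith
    have hane : (1:ℝ) - C ≠ 0 := ha.ne'
    have hset : {r ∈ Set.Icc (0:ℝ) (1/2) | C + (1-C)*(3*r^2-2*r^3) = r}
        = {((1 - C) - s)/(4*(1 - C)), ((1 - C) + s)/(4*(1 - C))} := by
      ext r
      simp only [Set.mem_sep_iff, Set.mem_Icc, Set.mem_insert_iff, Set.mem_singleton_iff]
      constructor
      · rintro ⟨⟨h0, h1⟩, heq⟩
        have hq := (key_M3 C r h1).1 heq
        have hfac : (4*(1-C)*r - ((1-C) - s)) * (4*(1-C)*r - ((1-C) + s)) = 0 := by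
          linear_combination 8*(1-C)*hq - hs2
        rcases mul_eq_zero.1 hfac with h3 | h3
        · left; field_simp; linarith
        · right; field_simp; linarith
      · rintro (rfl | rfl)
        · refine ⟨⟨div_nonneg (by linarith) (by linarith), ?_⟩, ?_⟩
          · rw [div_le_iff₀ h4a]; linarith
          · rw [key_M3 _ _ (by rw [div_le_iff₀ h4a]; linarith)]
            field_simp
            ring_nf
            nlinarith [hs2, sq_nonneg s]
        · refine ⟨⟨div_nonneg (by linarith) (by linarith), ?_⟩, ?_⟩
          · rw [div_le_iff₀ h4a]; linarith
          · rw [key_M3 _ _ (by rw [div_le_iff₀ h4a]; linarith)]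
            field_simp
            ring_nf
            nlinarith [hs2, sq_nonneg s]
    rw [hset, Set.encard_pair]
    intro h
    rw [div_eq_div_iff h4a.ne' h4a.ne'] at h
    nlinarith
  · -- one solution at C = 1/9
    have hset : {r ∈ Set.Icc (0:ℝ) (1/2) | 1/9 + (1-1/9)*(3*r^2-2*r^3) = r} = {(1:ℝ)/4} := by
      ext r
      simp only [Set.mem_sep_iff, Set.mem_Icc, Set.mem_singleton_iff]
      constructor
      · rintro ⟨⟨h0, h1⟩, heq⟩
        have hq := (key_M3 (1/9) r h1).1 heq
        have h2 : (4*r - 1)^2 = 0 := by linear_combination 9*hq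
        have := pow_eq_zero_iff (n := 2) (by norm_num) |>.1 h2
        linarith
      · rintro rfl
        norm_num
    rw [hset, Set.encard_singleton]
  · -- no solutions
    intro C hC1 hC2
    rw [Set.encard_eq_zero, Set.eq_empty_iff_forall_notMem]
    rintro r ⟨⟨h0, h1⟩, heq⟩
    have hq := (key_M3 C r h1).1 heq
    nlinarith [sq_nonneg (4*r - 1)]
end
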